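/- Let α be a partial action of a unital inverse semigroup S on an associative algebra A such that, for every s ∈ S, the ideal X_s is idempotent (X_s X_s = X_s) or non-degenerate. Then the algebraic crossed product A ⋊_α S is an associative algebra. -/

import Mathlib

open Finsupp

noncomputable section

/-- The natural partial order on an inverse semigroup: `r ≤ t` iff `r = t r* r`. -/
def sle {S : Type*} [Mul S] [Star S] (r t : S) : Prop := r = t * (star r * r)

/-- A partial action of a unital inverse semigroup `S` on an associative algebra `A`:
ideals `X s` and isomorphisms `act s : X (star s) → X s`. -/
structure PartialAction (S : Type*) [Monoid S] [StarMul S]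
    (A : Type*) [NonUnitalRing A] where
  X : S → Set A
  zero_mem : ∀ s, (0 : A) ∈ X s
  add_mem : ∀ s {a b : A}, a ∈ X s → b ∈ X s → a + b ∈ X s
  neg_mem : ∀ s {a : A}, a ∈ X s → -a ∈ X s
  mul_mem_left : ∀ s (a : A) {b : A}, b ∈ X s → a * b ∈ X s
  mul_mem_right : ∀ s (a : A) {b : A}, b ∈ X s → b * a ∈ X s
  act : S → A → A
  X_one : X 1 = Set.univ
  act_one : ∀ a : A, act 1 a = a
  act_add : ∀ s {a b : A}, a ∈ X (star s) → b ∈ X (star s) →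
    act s (a + b) = act s a + act s b
  act_mul : ∀ s {a b : A}, a ∈ X (star s) → b ∈ X (star s) →
    act s (a * b) = act s a * act s b
  mem_act : ∀ s {a : A}, a ∈ X (star s) → act s a ∈ X s
  act_act : ∀ s {a : A}, a ∈ X (star s) → act (star s) (act s a) = a
  range_eq : ∀ s t, act s '' (X (star s) ∩ X t) = X s ∩ X (s * t)
  comp : ∀ s t {a : A}, a ∈ X (star t) → act t a ∈ X t ∩ X (star s) →
    act s (act t a) = act (s * t) a

namespace PartialAction

variable {S : Type*} [Monoid S] [StarMul S] {A : Type*} [NonUnitalRing A]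
variable (P : PartialAction S A)

theorem mul_term_mem (s t : S) {a b : A} (ha : a ∈ P.X s) (hb : b ∈ P.X t) :
    P.act s (P.act (star s) a * b) ∈ P.X (s * t) := by
  have h1 : a ∈ P.X (star (star s)) := by rwa [star_star]
  have h2 := P.mem_act (star s) h1
  have h3 : P.act (star s) a * b ∈ P.X (star s) ∩ P.X t :=
    ⟨P.mul_mem_right _ b h2, P.mul_mem_left t _ hb⟩
  have h4 := Set.mem_image_of_mem (P.act s) h3
  rw [P.range_eq s t] at h4
  exact h4.2

theorem sum_mem {ι : Type*} (u : S) (tt : Finset ι) (F : ι → A)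
    (h : ∀ i ∈ tt, F i ∈ P.X u) : (∑ i ∈ tt, F i) ∈ P.X u :=
  Finset.sum_induction F (· ∈ P.X u) (fun _ _ ha hb => P.add_mem u ha hb)
    (P.zero_mem u) h

/-- The algebra `L` of formal sums `Σ a_s δ_s` with `a_s ∈ X s`. -/
def L : Type _ := {f : S →₀ A // ∀ u, f u ∈ P.X u}

instance : Zero P.L := ⟨⟨0, fun u => by simpa using P.zero_mem u⟩⟩

instance : Add P.L :=
  ⟨fun f g => ⟨f.1 + g.1, fun u => by
    rw [Finsupp.add_apply]; exact P.add_mem u (f.2 u) (g.2 u)⟩⟩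

instance : Mul P.L :=
  ⟨fun f g =>
    ⟨f.1.sum fun s a => g.1.sum fun t b =>
        Finsupp.single (s * t) (P.act s (P.act (star s) a * b)), by
      intro u
      classical
      rw [Finsupp.sum_apply]
      refine P.sum_mem u _ _ fun s hs => ?_
      dsimp only
      rw [Finsupp.sum_apply]
      refine P.sum_mem u _ _ fun t ht => ?_
      dsimp only
      rw [Finsupp.single_apply]
      split_ifs with h
      · exact h ▸ P.mul_term_mem s t (f.2 s) (g.2 t)
      · exact P.zero_mem u⟩⟩

/-- `a δ_r` as an element of `L`. -/
def del (r : S) (a : A) (h : a ∈ P.X r) : P.L :=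
  ⟨Finsupp.single r a, fun u => by
    classical
    rw [Finsupp.single_apply]
    split_ifs with hh
    · exact hh ▸ h
    · exact P.zero_mem u⟩

/-- The relation generating the ideal `I`: `a δ_r ~ a δ_t` whenever `r ≤ t`, `a ∈ X r`. -/
def crel : P.L → P.L → Prop := fun x y =>
  ∃ (r t : S) (a : A) (h : a ∈ P.X r) (h' : a ∈ P.X t),
    sle r t ∧ x = P.del r a h ∧ y = P.del t a h'

/-- The algebraic crossed product `A ⋊_α S = L / I`. -/
abbrev CP : Type _ := (ringConGen P.crel).Quotient

/-- The quotient map `L → A ⋊_α S`. -/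
def toCP : P.L → P.CP := fun x => (x : P.CP)

/-- The partial representation `s ↦ 1_s δ_s`, given identities `one s` for the ideals. -/
def rep (one : S → A) (hmem : ∀ s, one s ∈ P.X s) : S → P.CP :=
  fun s => P.toCP (P.del s (one s) (hmem s))

end PartialAction

namespace PartialAction

variable {S : Type*} [Monoid S] [StarMul S] {A : Type*} [NonUnitalRing A]
variable (P : PartialAction S A)

theorem act_zero (s : S) : P.act s 0 = 0 := by
  have h := P.act_add s (P.zero_mem (star s)) (P.zero_mem (star s))
  rw [add_zero] at h
  have h2 : P.act s 0 + 0 = P.act s 0 + P.act s 0 := by rw [add_zero]; exact h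
  exact (add_left_cancel h2).symm

theorem mem_act' (s : S) {a : A} (h : a ∈ P.X s) : P.act (star s) a ∈ P.X (star s) :=
  P.mem_act (star s) (by rwa [star_star])

theorem act_act' (s : S) {a : A} (h : a ∈ P.X s) : P.act s (P.act (star s) a) = a := by
  have := P.act_act (star s) (a := a) (by rwa [star_star])
  rwa [star_star] at this

theorem actStar_add (t : S) {x y : A} (hx : x ∈ P.X t) (hy : y ∈ P.X t) :
    P.act (star t) (x + y) = P.act (star t) x + P.act (star t) y :=
  P.act_add (star t) (by rwa [star_star]) (by rwa [star_star])

theorem actStar_mul (t : S) {x y : A} (hx : x ∈ P.X t) (hy : y ∈ P.X t) :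
    P.act (star t) (x * y) = P.act (star t) x * P.act (star t) y :=
  P.act_mul (star t) (by rwa [star_star]) (by rwa [star_star])

/-- The coefficient of the product of two formal monomials. -/
def M (s : S) (a b : A) : A := P.act s (P.act (star s) a * b)

theorem M_mem {s t : S} {a b : A} (ha : a ∈ P.X s) (hb : b ∈ P.X t) :
    P.M s a b ∈ P.X (s * t) := P.mul_term_mem s t ha hb

theorem M_zero_left (s : S) (b : A) : P.M s 0 b = 0 := by
  simp [M, P.act_zero]

theorem M_zero_right (s : S) (a : A) : P.M s a 0 = 0 := by
  simp [M, P.act_zero]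

theorem M_add_left (s : S) {a a' : A} (b : A) (ha : a ∈ P.X s) (ha' : a' ∈ P.X s) :
    P.M s (a + a') b = P.M s a b + P.M s a' b := by
  unfold M
  rw [P.actStar_add s ha ha', add_mul]
  exact P.act_add s
    (P.mul_mem_right (star s) b (P.mem_act' s ha))
    (P.mul_mem_right (star s) b (P.mem_act' s ha'))

theorem M_add_right (s : S) {a : A} (ha : a ∈ P.X s) (b b' : A) :
    P.M s a (b + b') = P.M s a b + P.M s a b' := by
  unfold M
  rw [mul_add]
  exact P.act_add s
    (P.mul_mem_right (star s) b (P.mem_act' s ha))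
    (P.mul_mem_right (star s) b' (P.mem_act' s ha))

theorem L_ext {f g : P.L} (h : f.1 = g.1) : f = g := Subtype.ext h

instance instSMulNatL : SMul ℕ P.L :=
  ⟨fun n f => ⟨n • f.1, fun u => by
    rw [Finsupp.smul_apply]
    induction n with
    | zero => simpa using P.zero_mem u
    | succ n ih => rw [succ_nsmul]; exact P.add_mem u ih (f.2 u)⟩⟩

instance instAddCommMonoidL : AddCommMonoid P.L :=
  Function.Injective.addCommMonoid (M₁ := P.L) Subtype.val Subtype.val_injective rfl
    (fun _ _ => rfl) (fun _ _ => rfl)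

/-- `Subtype.val` as an additive monoid hom. -/
def valHom : P.L →+ (S →₀ A) where
  toFun := Subtype.val
  map_zero' := rfl
  map_add' := fun _ _ => rfl

theorem val_sum {ι : Type*} (I : Finset ι) (F : ι → P.L) :
    (∑ i ∈ I, F i).1 = ∑ i ∈ I, (F i).1 :=
  map_sum P.valHom F I

theorem mul_val (f g : P.L) :
    (f * g).1 = ∑ s ∈ f.1.support, ∑ t ∈ g.1.support,
      Finsupp.single (s * t) (P.M s (f.1 s) (g.1 t)) := rfl

theorem del_val (r : S) (a : A) (h : a ∈ P.X r) : (P.del r a h).1 = Finsupp.single r a := rfl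

theorem del_congr {r r' : S} {a a' : A} (hr : r = r') (ha : a = a')
    (h : a ∈ P.X r) (h' : a' ∈ P.X r') : P.del r a h = P.del r' a' h' := by
  subst hr; subst ha; rfl

theorem del_zero (r : S) (h : (0:A) ∈ P.X r) : P.del r 0 h = 0 :=
  P.L_ext (by rw [del_val, Finsupp.single_zero]; rfl)

theorem del_add (r : S) {x y : A} (h : x + y ∈ P.X r) (hx : x ∈ P.X r) (hy : y ∈ P.X r) :
    P.del r (x + y) h = P.del r x hx + P.del r y hy :=
  P.L_ext (by simp [del_val]; rfl)

theorem mul_eq_sum (f g : P.L) (F G : Finset S)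
    (hF : f.1.support ⊆ F) (hG : g.1.support ⊆ G) :
    f * g = ∑ s ∈ F, ∑ t ∈ G,
      P.del (s * t) (P.M s (f.1 s) (g.1 t)) (P.M_mem (f.2 s) (g.2 t)) := by
  apply P.L_ext
  rw [P.val_sum, P.mul_val]
  have step1 : ∀ s : S, ∑ t ∈ g.1.support, Finsupp.single (s * t) (P.M s (f.1 s) (g.1 t))
      = ∑ t ∈ G, Finsupp.single (s * t) (P.M s (f.1 s) (g.1 t)) := by
    intro s
    refine Finset.sum_subset hG fun t _ ht => ?_
    rw [Finsupp.notMem_support_iff.mp ht, P.M_zero_right, Finsupp.single_zero]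
  calc ∑ s ∈ f.1.support, ∑ t ∈ g.1.support, Finsupp.single (s * t) (P.M s (f.1 s) (g.1 t))
      = ∑ s ∈ f.1.support, ∑ t ∈ G, Finsupp.single (s * t) (P.M s (f.1 s) (g.1 t)) := by
        exact Finset.sum_congr rfl fun s _ => step1 s
    _ = ∑ s ∈ F, ∑ t ∈ G, Finsupp.single (s * t) (P.M s (f.1 s) (g.1 t)) := by
        refine Finset.sum_subset hF fun s _ hs => ?_
        refine Finset.sum_eq_zero fun t _ => ?_
        rw [Finsupp.notMem_support_iff.mp hs, P.M_zero_left, Finsupp.single_zero]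
    _ = ∑ s ∈ F, (∑ t ∈ G, P.del (s * t) (P.M s (f.1 s) (g.1 t)) (P.M_mem (f.2 s) (g.2 t))).1 := by
        exact Finset.sum_congr rfl fun s _ =>
          (P.val_sum G (fun t => P.del (s * t) (P.M s (f.1 s) (g.1 t))
            (P.M_mem (f.2 s) (g.2 t)))).symm

theorem del_mul_del {s t : S} {a b : A} (ha : a ∈ P.X s) (hb : b ∈ P.X t) :
    P.del s a ha * P.del t b hb = P.del (s * t) (P.M s a b) (P.M_mem ha hb) := by
  classical
  rw [P.mul_eq_sum (P.del s a ha) (P.del t b hb) {s} {t}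
    Finsupp.support_single_subset Finsupp.support_single_subset]
  rw [Finset.sum_singleton, Finset.sum_singleton]
  exact P.del_congr rfl (by rw [del_val, del_val, Finsupp.single_eq_same, Finsupp.single_eq_same]) _ _

theorem L_zero_mul (g : P.L) : (0 : P.L) * g = 0 := by
  apply P.L_ext
  have h0 : (0 : P.L).1 = 0 := rfl
  rw [P.mul_val, h0]
  simp

theorem L_mul_zero (f : P.L) : f * (0 : P.L) = 0 := by
  apply P.L_ext
  have h0 : (0 : P.L).1 = 0 := rfl
  rw [P.mul_val, h0]
  simp

theorem L_add_mul (f f' g : P.L) : (f + f') * g = f * g + f' * g := by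
  classical
  have hsupp : (f + f').1.support ⊆ f.1.support ∪ f'.1.support := Finsupp.support_add
  rw [P.mul_eq_sum (f + f') g (f.1.support ∪ f'.1.support) g.1.support hsupp subset_rfl,
    P.mul_eq_sum f g (f.1.support ∪ f'.1.support) g.1.support Finset.subset_union_left subset_rfl,
    P.mul_eq_sum f' g (f.1.support ∪ f'.1.support) g.1.support Finset.subset_union_right subset_rfl,
    ← Finset.sum_add_distrib]
  refine Finset.sum_congr rfl fun s _ => ?_
  rw [← Finset.sum_add_distrib]
  refine Finset.sum_congr rfl fun t _ => ?_
  have hval : (f + f').1 s = f.1 s + f'.1 s := rfl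
  have hmem1 := P.M_mem (f.2 s) (g.2 t)
  have hmem2 := P.M_mem (f'.2 s) (g.2 t)
  calc P.del (s * t) (P.M s ((f + f').1 s) (g.1 t)) (P.M_mem ((f + f').2 s) (g.2 t))
      = P.del (s * t) (P.M s (f.1 s) (g.1 t) + P.M s (f'.1 s) (g.1 t))
          (P.add_mem _ hmem1 hmem2) :=
        P.del_congr rfl (by rw [hval, P.M_add_left s (g.1 t) (f.2 s) (f'.2 s)]) _ _
    _ = _ := P.del_add _ _ hmem1 hmem2

theorem L_mul_add (f g g' : P.L) : f * (g + g') = f * g + f * g' := by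
  classical
  have hsupp : (g + g').1.support ⊆ g.1.support ∪ g'.1.support := Finsupp.support_add
  rw [P.mul_eq_sum f (g + g') f.1.support (g.1.support ∪ g'.1.support) subset_rfl hsupp,
    P.mul_eq_sum f g f.1.support (g.1.support ∪ g'.1.support) subset_rfl Finset.subset_union_left,
    P.mul_eq_sum f g' f.1.support (g.1.support ∪ g'.1.support) subset_rfl Finset.subset_union_right,
    ← Finset.sum_add_distrib]
  refine Finset.sum_congr rfl fun s _ => ?_
  rw [← Finset.sum_add_distrib]
  refine Finset.sum_congr rfl fun t _ => ?_
  have hval : (g + g').1 t = g.1 t + g'.1 t := rfl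
  have hmem1 := P.M_mem (f.2 s) (g.2 t)
  have hmem2 := P.M_mem (f.2 s) (g'.2 t)
  calc P.del (s * t) (P.M s (f.1 s) ((g + g').1 t)) (P.M_mem (f.2 s) ((g + g').2 t))
      = P.del (s * t) (P.M s (f.1 s) (g.1 t) + P.M s (f.1 s) (g'.1 t))
          (P.add_mem _ hmem1 hmem2) :=
        P.del_congr rfl (by rw [hval, P.M_add_right s (f.2 s) (g.1 t) (g'.1 t)]) _ _
    _ = _ := P.del_add _ _ hmem1 hmem2

instance instNonUnitalNonAssocSemiringL : NonUnitalNonAssocSemiring P.L :=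
  { P.instAddCommMonoidL, (inferInstance : Mul P.L) with
    left_distrib := P.L_mul_add
    right_distrib := fun f f' g => P.L_add_mul f f' g
    zero_mul := P.L_zero_mul
    mul_zero := P.L_mul_zero }

theorem eq_sum_del (f : P.L) : f = ∑ s ∈ f.1.support, P.del s (f.1 s) (f.2 s) := by
  apply P.L_ext
  rw [P.val_sum]
  exact (Finsupp.sum_single f.1).symm


/-- The Dokuchaev–Exel multiplier identity: if `X t` is idempotent or
non-degenerate, then `α_t(α_{t*}(a'·b)·c) = a'·α_t(α_{t*}(b)·c)`. -/
theorem claimC {t : S}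
    (hXt : (∀ x ∈ P.X t, x ∈ AddSubmonoid.closure
        {z : A | ∃ a ∈ P.X t, ∃ b ∈ P.X t, z = a * b}) ∨
      (∀ x ∈ P.X t, ((∀ y ∈ P.X t, x * y = 0) ∨ (∀ y ∈ P.X t, y * x = 0)) → x = 0))
    (a' c : A) {b : A} (hb : b ∈ P.X t) :
    P.act t (P.act (star t) (a' * b) * c) = a' * P.act t (P.act (star t) b * c) := by
  rcases hXt with hidem | hnd
  · -- idempotent case: induct over the additive closure of products
    have key : ∀ x, x ∈ AddSubmonoid.closure {z : A | ∃ a ∈ P.X t, ∃ b ∈ P.X t, z = a * b} →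
        x ∈ P.X t ∧
          P.act t (P.act (star t) (a' * x) * c) = a' * P.act t (P.act (star t) x * c) := by
      intro x hx
      induction hx using AddSubmonoid.closure_induction with
      | mem z hz =>
        obtain ⟨p, hp, q, hq, rfl⟩ := hz
        refine ⟨P.mul_mem_left t p hq, ?_⟩
        have hapq : a' * p ∈ P.X t := P.mul_mem_left t a' hp
        have e1 : a' * (p * q) = (a' * p) * q := (mul_assoc a' p q).symm
        rw [e1, P.actStar_mul t hapq hq, P.actStar_mul t hp hq, mul_assoc, mul_assoc]
        have h1 : P.act (star t) (a' * p) ∈ P.X (star t) := P.mem_act' t hapq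
        have h2 : P.act (star t) q * c ∈ P.X (star t) :=
          P.mul_mem_right (star t) c (P.mem_act' t hq)
        have h3 : P.act (star t) p ∈ P.X (star t) := P.mem_act' t hp
        rw [P.act_mul t h1 h2, P.act_mul t h3 h2, P.act_act' t hapq, P.act_act' t hp, mul_assoc]
      | zero =>
        refine ⟨P.zero_mem t, ?_⟩
        simp [P.act_zero]
      | add x y hx hy ihx ihy =>
        obtain ⟨hxm, hxe⟩ := ihx
        obtain ⟨hym, hye⟩ := ihy
        refine ⟨P.add_mem t hxm hym, ?_⟩
        have haxm : a' * x ∈ P.X t := P.mul_mem_left t a' hxm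
        have haym : a' * y ∈ P.X t := P.mul_mem_left t a' hym
        rw [mul_add a' x y, P.actStar_add t haxm haym, P.actStar_add t hxm hym,
          add_mul, add_mul,
          P.act_add t (P.mul_mem_right (star t) c (P.mem_act' t haxm))
            (P.mul_mem_right (star t) c (P.mem_act' t haym)),
          P.act_add t (P.mul_mem_right (star t) c (P.mem_act' t hxm))
            (P.mul_mem_right (star t) c (P.mem_act' t hym)),
          hxe, hye, mul_add]
    exact (key b (hidem b hb)).2
  · -- non-degenerate case
    have hab : a' * b ∈ P.X t := P.mul_mem_left t a' hb
    have hL : P.act t (P.act (star t) (a' * b) * c) ∈ P.X t :=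
      P.mem_act t (P.mul_mem_right (star t) c (P.mem_act' t hab))
    have hW : P.act t (P.act (star t) b * c) ∈ P.X t :=
      P.mem_act t (P.mul_mem_right (star t) c (P.mem_act' t hb))
    have hR : a' * P.act t (P.act (star t) b * c) ∈ P.X t := P.mul_mem_left t a' hW
    have hDmem : P.act t (P.act (star t) (a' * b) * c)
        - a' * P.act t (P.act (star t) b * c) ∈ P.X t := by
      rw [sub_eq_add_neg]
      exact P.add_mem t hL (P.neg_mem t hR)
    have hDzero := hnd _ hDmem (Or.inl (fun y hy => ?_))
    · exact sub_eq_zero.mp hDzero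
    -- show (LHS - RHS) * y = 0 for `y ∈ X t`
    rw [sub_mul]
    have hv : P.act (star t) y ∈ P.X (star t) := P.mem_act' t hy
    have fold : ∀ z : A, z ∈ P.X (star t) →
        P.act t z * y = P.act t (z * P.act (star t) y) := by
      intro z hz
      conv_lhs => rw [← P.act_act' t hy]
      exact (P.act_mul t hz hv).symm
    have hz1 : P.act (star t) (a' * b) * c ∈ P.X (star t) :=
      P.mul_mem_right (star t) c (P.mem_act' t hab)
    have hz2 : P.act (star t) b * c ∈ P.X (star t) :=
      P.mul_mem_right (star t) c (P.mem_act' t hb)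
    have hc' : c * P.act (star t) y ∈ P.X (star t) := P.mul_mem_left (star t) c hv
    have e1 : P.act t (P.act (star t) (a' * b) * c) * y
        = (a' * b) * P.act t (c * P.act (star t) y) := by
      rw [fold _ hz1, mul_assoc,
        P.act_mul t (P.mem_act' t hab) hc', P.act_act' t hab]
    have e2 : (a' * P.act t (P.act (star t) b * c)) * y
        = (a' * b) * P.act t (c * P.act (star t) y) := by
      rw [mul_assoc, fold _ hz2, mul_assoc,
        P.act_mul t (P.mem_act' t hb) hc', P.act_act' t hb, ← mul_assoc]
    rw [e1, e2, sub_self]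

/-- The key associativity identity for coefficients. -/
theorem key_assoc {s t u : S}
    (hXt : (∀ x ∈ P.X t, x ∈ AddSubmonoid.closure
        {z : A | ∃ a ∈ P.X t, ∃ b ∈ P.X t, z = a * b}) ∨
      (∀ x ∈ P.X t, ((∀ y ∈ P.X t, x * y = 0) ∨ (∀ y ∈ P.X t, y * x = 0)) → x = 0))
    {a b c : A} (ha : a ∈ P.X s) (hb : b ∈ P.X t) (hc : c ∈ P.X u) :
    P.M (s * t) (P.M s a b) c = P.M s a (P.M t b c) := by
  have ha' : P.act (star s) a ∈ P.X (star s) := P.mem_act' s ha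
  have hab : P.act (star s) a * b ∈ P.X (star s) := P.mul_mem_right (star s) b ha'
  have habt : P.act (star s) a * b ∈ P.X t := P.mul_mem_left t _ hb
  -- step 1 : α_{(st)*}(M s a b) = α_{t*}(a' b)
  have hmem_x : P.M s a b ∈ P.X s := by
    have := Set.mem_image_of_mem (P.act s) (Set.mem_inter hab habt)
    rw [P.range_eq s t] at this
    exact this.1
  have hstep1 : P.act (star (s * t)) (P.M s a b)
      = P.act (star t) (P.act (star s) a * b) := by
    have hcomp := P.comp (star t) (star s) (a := P.M s a b)
      (by rw [star_star]; exact hmem_x)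
      (by
        show P.act (star s) (P.act s (P.act (star s) a * b)) ∈ _
        rw [P.act_act s hab]
        exact ⟨hab, by rwa [star_star]⟩)
    rw [star_mul, ← hcomp]
    show P.act (star t) (P.act (star s) (P.act s (P.act (star s) a * b))) = _
    rw [P.act_act s hab]
  have hq : P.act (star t) (P.act (star s) a * b) ∈ P.X (star t) := P.mem_act' t habt
  have hz : P.act (star t) (P.act (star s) a * b) * c ∈ P.X (star t) :=
    P.mul_mem_right (star t) c hq
  have hCt : P.act t (P.act (star t) (P.act (star s) a * b) * c)
      = P.act (star s) a * P.act t (P.act (star t) b * c) :=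
    P.claimC hXt (P.act (star s) a) c hb
  have hw : P.act t (P.act (star t) b * c) ∈ P.X t :=
    P.mem_act t (P.mul_mem_right (star t) c (P.mem_act' t hb))
  have hcomp2 := P.comp s t (a := P.act (star t) (P.act (star s) a * b) * c) hz
    (⟨P.mem_act t hz, by
      rw [hCt]
      exact P.mul_mem_right (star s) _ ha'⟩)
  show P.act (s * t) (P.act (star (s * t)) (P.M s a b) * c) = _
  rw [hstep1, ← hcomp2, hCt]
  rfl

theorem L_del_assoc
    (hX : ∀ s : S,
      (∀ x ∈ P.X s,
        x ∈ AddSubmonoid.closure {z : A | ∃ a ∈ P.X s, ∃ b ∈ P.X s, z = a * b}) ∨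
      (∀ x ∈ P.X s,
        ((∀ y ∈ P.X s, x * y = 0) ∨ (∀ y ∈ P.X s, y * x = 0)) → x = 0))
    {s t u : S} {a b c : A} (ha : a ∈ P.X s) (hb : b ∈ P.X t) (hc : c ∈ P.X u) :
    P.del s a ha * P.del t b hb * P.del u c hc
      = P.del s a ha * (P.del t b hb * P.del u c hc) := by
  rw [P.del_mul_del ha hb, P.del_mul_del (P.M_mem ha hb) hc,
    P.del_mul_del hb hc, P.del_mul_del ha (P.M_mem hb hc)]
  exact P.del_congr (mul_assoc s t u) (P.key_assoc (hX t) ha hb hc) _ _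

theorem L_mul_assoc
    (hX : ∀ s : S,
      (∀ x ∈ P.X s,
        x ∈ AddSubmonoid.closure {z : A | ∃ a ∈ P.X s, ∃ b ∈ P.X s, z = a * b}) ∨
      (∀ x ∈ P.X s,
        ((∀ y ∈ P.X s, x * y = 0) ∨ (∀ y ∈ P.X s, y * x = 0)) → x = 0))
    (f g h : P.L) : f * g * h = f * (g * h) := by
  conv_lhs => rw [P.eq_sum_del f, P.eq_sum_del g, P.eq_sum_del h]
  conv_rhs => rw [P.eq_sum_del f, P.eq_sum_del g, P.eq_sum_del h]
  simp only [Finset.sum_mul, Finset.mul_sum]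
  refine Finset.sum_congr rfl fun i₃ _ => Finset.sum_congr rfl fun i₂ _ =>
    Finset.sum_congr rfl fun i₁ _ => ?_
  exact P.L_del_assoc hX (f.2 i₁) (g.2 i₂) (h.2 i₃)

end PartialAction

/-- If each ideal `X_s` is idempotent or non-degenerate, the algebraic crossed
product `A ⋊_α S` is associative. -/
theorem crossedProduct_assoc
    {S : Type*} [Monoid S] [StarMul S]
    (hinv : ∀ s : S, s * star s * s = s)
    (hcomm : ∀ s t : S, (s * star s) * (t * star t) = (t * star t) * (s * star s))
    {A : Type*} [NonUnitalRing A] (P : PartialAction S A)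
    (hX : ∀ s : S,
      (∀ x ∈ P.X s,
        x ∈ AddSubmonoid.closure {z : A | ∃ a ∈ P.X s, ∃ b ∈ P.X s, z = a * b}) ∨
      (∀ x ∈ P.X s,
        ((∀ y ∈ P.X s, x * y = 0) ∨ (∀ y ∈ P.X s, y * x = 0)) → x = 0)) :
    ∀ x y z : P.CP, x * y * z = x * (y * z) := by
  intro x y z
  obtain ⟨f, rfl⟩ := Quotient.exists_rep x
  obtain ⟨g, rfl⟩ := Quotient.exists_rep y
  obtain ⟨h, rfl⟩ := Quotient.exists_rep z
  exact congrArg (fun l : P.L => (l : P.CP)) (P.L_mul_assoc hX f g h)
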